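/- Let R be a unital von Neumann regular ring and e ∈ R an idempotent, and let 𝕃(R) = {xR : x ∈ R} be the lattice of principal right ideals of R ordered by inclusion. Then the maps φ_e : 𝕃(R)↓eR → 𝕃(eRe), X ↦ X ∩ eRe (which equals Xe), and ψ_e : 𝕃(eRe) → 𝕃(R)↓eR, Y ↦ YR, are mutually inverse order isomorphisms between the set of principal right ideals of R contained in eR and the set of principal right ideals of the corner ring eRe. -/
import Mathlib


theorem stmt16 {R : Type*} [Ring R]
    (hreg : ∀ x : R, ∃ y : R, x = x * y * x)
    (e : R) (he : e * e = e)
    -- `LR` is the lattice `𝕃(R)` of principal right ideals of `R`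
    (LR : Set (Set R)) (hLR : LR = {X | ∃ x : R, X = {z | ∃ r : R, z = x * r}})
    -- `LC` is the lattice `𝕃(eRe)` of principal right ideals of the corner `eRe`
    (LC : Set (Set R))
    (hLC : LC = {Y | ∃ x : R, x = e * x * e ∧
      Y = {z | ∃ r : R, z = x * (e * r * e)}})
    -- `φ X = X ∩ eRe` and `ψ Y = Y·R`
    (φ : Set R → Set R) (hφ : ∀ X, φ X = {z ∈ X | z = e * z * e})
    (ψ : Set R → Set R) (hψ : ∀ Y, ψ Y = {z | ∃ y ∈ Y, ∃ r : R, z = y * r}) :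
    (∀ X ∈ LR, X ⊆ {z | ∃ r : R, z = e * r} →
        φ X ∈ LC ∧ ψ (φ X) = X ∧ φ X = {z | ∃ x ∈ X, z = x * e})
      ∧ (∀ Y ∈ LC, ψ Y ∈ LR ∧ ψ Y ⊆ {z | ∃ r : R, z = e * r} ∧ φ (ψ Y) = Y)
      ∧ (∀ X ∈ LR, ∀ X' ∈ LR, X ⊆ {z | ∃ r : R, z = e * r} →
          X' ⊆ {z | ∃ r : R, z = e * r} → (X ⊆ X' ↔ φ X ⊆ φ X')) := by
  subst hLR hLC
  have he' : ∀ t : R, e * (e * t) = e * t := fun t => by rw [← mul_assoc, he]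
  have key1 : ∀ z : R, z = e * z * e → z = z * e := by
    intro z hz
    nth_rewrite 2 [hz]
    rw [mul_assoc, he, ← hz]
  refine ⟨?_, ?_, ?_⟩
  · rintro X ⟨x, rfl⟩ hXe
    obtain ⟨y, hxy⟩ := hreg x
    have hex : e * x = x := by
      obtain ⟨r, hr⟩ := hXe ⟨1, (mul_one x).symm⟩
      rw [hr, ← mul_assoc, he]
    have hex' : ∀ t : R, e * (x * t) = x * t := fun t => by rw [← mul_assoc, hex]
    have hfz : ∀ r : R, x * (y * (x * r)) = x * r := fun r => by
      rw [← mul_assoc, ← mul_assoc, ← hxy]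
    refine ⟨?_, ?_, ?_⟩
    · rw [hφ]
      refine ⟨x * y * e, by simp only [mul_assoc, he, hex'], ?_⟩
      ext z
      simp only [Set.mem_setOf_eq, Set.mem_sep_iff]
      constructor
      · rintro ⟨⟨r, rfl⟩, hz⟩
        refine ⟨x * r, ?_⟩
        rw [← hz]
        simp only [mul_assoc, hex', hfz]
      · rintro ⟨r, rfl⟩
        exact ⟨⟨y * (e * (e * r * e)), by simp only [mul_assoc]⟩,
          by simp only [mul_assoc, he, he', hex']⟩
    · rw [hψ, hφ]
      ext z
      simp only [Set.mem_setOf_eq, Set.mem_sep_iff]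
      constructor
      · rintro ⟨w, ⟨⟨r, rfl⟩, -⟩, s, rfl⟩
        exact ⟨r * s, by rw [mul_assoc]⟩
      · rintro ⟨r, rfl⟩
        refine ⟨x * y * e, ⟨⟨y * e, by rw [mul_assoc]⟩,
          by simp only [mul_assoc, he, hex']⟩, x * r, ?_⟩
        simp only [mul_assoc, hex', hfz]
    · rw [hφ]
      ext z
      simp only [Set.mem_setOf_eq, Set.mem_sep_iff]
      constructor
      · rintro ⟨hzX, hz⟩
        refine ⟨z, hzX, ?_⟩
        nth_rewrite 2 [hz]
        rw [mul_assoc, mul_assoc, he, ← mul_assoc, ← hz]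
      · rintro ⟨w, ⟨r, rfl⟩, rfl⟩
        exact ⟨⟨r * e, by rw [mul_assoc]⟩, by simp only [mul_assoc, he, hex']⟩
  · rintro Y ⟨c, hc, rfl⟩
    obtain ⟨d, hcd⟩ := hreg c
    have hec : e * c = c := by
      nth_rewrite 1 [hc]
      rw [← mul_assoc, ← mul_assoc, he, ← hc]
    have hce : c * e = c := by
      nth_rewrite 1 [hc]
      rw [mul_assoc, he, ← hc]
    have hec' : ∀ t : R, e * (c * t) = c * t := fun t => by rw [← mul_assoc, hec]
    have hce' : ∀ t : R, c * (e * t) = c * t := fun t => by rw [← mul_assoc, hce]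
    refine ⟨?_, ?_, ?_⟩
    · rw [hψ]
      refine ⟨c, ?_⟩
      ext z
      simp only [Set.mem_setOf_eq]
      constructor
      · rintro ⟨w, ⟨r, rfl⟩, s, rfl⟩
        exact ⟨(e * r * e) * s, by rw [mul_assoc]⟩
      · rintro ⟨r, rfl⟩
        refine ⟨c, ⟨d * c, ?_⟩, r, rfl⟩
        simp only [mul_assoc, hce, hce']
        rw [← mul_assoc, ← hcd]
    · rw [hψ]
      rintro z ⟨w, ⟨r, rfl⟩, s, rfl⟩
      exact ⟨c * ((e * r * e) * s), by simp only [mul_assoc, hec']⟩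
    · rw [hφ, hψ]
      ext z
      simp only [Set.mem_setOf_eq, Set.mem_sep_iff]
      constructor
      · rintro ⟨⟨w, ⟨r, rfl⟩, s, rfl⟩, hz⟩
        have hze := key1 _ hz
        refine ⟨(e * r * e) * s, ?_⟩
        nth_rewrite 1 [hze]
        simp only [mul_assoc, he, he']
      · rintro ⟨r, rfl⟩
        exact ⟨⟨c * (e * r * e), ⟨r, rfl⟩, 1, (mul_one _).symm⟩,
          by simp only [mul_assoc, he, he', hec']⟩
  · rintro X ⟨x, rfl⟩ X' ⟨x', rfl⟩ hXe hX'e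
    constructor
    · intro hss
      rw [hφ, hφ]
      rintro z ⟨hz, hz2⟩
      exact ⟨hss hz, hz2⟩
    · intro hss
      obtain ⟨y, hxy⟩ := hreg x
      have hex : e * x = x := by
        obtain ⟨r, hr⟩ := hXe ⟨1, (mul_one x).symm⟩
        rw [hr, ← mul_assoc, he]
      have hex' : ∀ t : R, e * (x * t) = x * t := fun t => by rw [← mul_assoc, hex]
      have hfz : ∀ r : R, x * (y * (x * r)) = x * r := fun r => by
        rw [← mul_assoc, ← mul_assoc, ← hxy]
      have hg : (x * y * e) ∈ φ {z | ∃ r : R, z = x * r} := by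
        rw [hφ]
        exact ⟨⟨y * e, by rw [mul_assoc]⟩, by simp only [mul_assoc, he, hex']⟩
      have hg' := hss hg
      rw [hφ] at hg'
      obtain ⟨⟨s, hs⟩, -⟩ := hg'
      rintro z ⟨r, rfl⟩
      refine ⟨s * (x * r), ?_⟩
      rw [← mul_assoc, ← hs]
      simp only [mul_assoc, hex', hfz]
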